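/- Let (u,v) be a mutually abelian-bordered pair of binary words with |u| = |v| = n ≥ 3, and set i = lsb(u,v) and j = lsb(v,u). Then i + j > n if and only if there exist nonempty binary words α, γ, β, β', γ', α' such that u = αγβ, v = β'γ'α', αγ ~ γ'α', γβ ~ β'γ', |αγ| = j, |γβ| = i, and both (γβ, β'γ') and (αγ, γ'α') are mutually abelian-unbordered pairs. -/
import Mathlib


/-- Abelian equivalence of binary words; the alphabet `{a, b}` is encoded by
`Bool` with `a = true` and `b = false`. -/
def AbEq (x y : List Bool) : Prop :=
  x.count true = y.count true ∧ x.count false = y.count false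

/-- `(x, y)` is an internal abelian-border of `(u, v)`: `x` is a nonempty proper
suffix of `u`, `y` is a proper prefix of `v`, and `x ~ y`. -/
def IsIntBorder (u v x y : List Bool) : Prop :=
  x ≠ [] ∧ x ≠ u ∧ x <:+ u ∧ y <+: v ∧ y ≠ v ∧ AbEq x y

/-- `(x, y)` is an external abelian-border of `(u, v)`: `x` is a nonempty proper
prefix of `u`, `y` is a proper suffix of `v`, and `x ~ y`. -/
def IsExtBorder (u v x y : List Bool) : Prop :=
  x ≠ [] ∧ x ≠ u ∧ x <+: u ∧ y <:+ v ∧ y ≠ v ∧ AbEq x y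

/-- `(u, v)` has an internal abelian-border. -/
def HasIntB (u v : List Bool) : Prop := ∃ x y, IsIntBorder u v x y

/-- `(u, v)` has an external abelian-border. -/
def HasExtB (u v : List Bool) : Prop := ∃ x y, IsExtBorder u v x y

/-- `(u, v)` is mutually abelian-bordered. -/
def MAB (u v : List Bool) : Prop := HasIntB u v ∧ HasExtB u v

/-- `(u, v)` is mutually abelian-unbordered. -/
def MAU (u v : List Bool) : Prop := ¬ HasIntB u v ∧ ¬ HasExtB u v

/-- `lsb u v` is the length of the shortest internal abelian-border of `(u, v)`:
the least `t` with `1 ≤ t ≤ |u| - 1` such that the suffix of `u` of length `t`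
is abelian equivalent to the prefix of `v` of length `t`. -/
noncomputable def lsb (u v : List Bool) : ℕ :=
  sInf {t | 1 ≤ t ∧ t ≤ u.length - 1 ∧ AbEq (u.drop (u.length - t)) (v.take t)}

lemma length_eq_counts (x : List Bool) : x.length = x.count true + x.count false := by
  induction x with
  | nil => simp
  | cons a l ih =>
    rw [List.length_cons, List.count_cons, List.count_cons]
    cases a <;> simp <;> omega

lemma abEq_length {x y : List Bool} (h : AbEq x y) : x.length = y.length := by
  rw [length_eq_counts, length_eq_counts, h.1, h.2]

lemma abEq_symm {x y : List Bool} (h : AbEq x y) : AbEq y x := ⟨h.1.symm, h.2.symm⟩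

lemma abEq_cancel {p q r s : List Bool} (h : AbEq (p++q) (r++s)) (h2 : AbEq p s) :
    AbEq q r := by
  obtain ⟨h1, h3⟩ := h; obtain ⟨h4, h5⟩ := h2
  simp [List.count_append] at h1 h3
  exact ⟨by omega, by omega⟩

lemma suffix_eq_drop {x u : List Bool} (h : x <:+ u) :
    x = u.drop (u.length - x.length) := by
  obtain ⟨w, rfl⟩ := h
  simp [List.length_append]

lemma lsbSet_nonempty {u v : List Bool} (h : HasIntB u v) :
    {t | 1 ≤ t ∧ t ≤ u.length - 1 ∧ AbEq (u.drop (u.length - t)) (v.take t)}.Nonempty := by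
  obtain ⟨x, y, hx0, hxu, hxsuf, hypre, hyv, hab⟩ := h
  refine ⟨x.length, List.length_pos_iff.mpr hx0, ?_, ?_⟩
  · have h1 := hxsuf.length_le
    have h2 : x.length ≠ u.length := fun he => hxu (hxsuf.eq_of_length he)
    have h3 : 0 < x.length := List.length_pos_iff.mpr hx0
    omega
  · have hx : u.drop (u.length - x.length) = x := (suffix_eq_drop hxsuf).symm
    have hy : v.take x.length = y := by
      rw [abEq_length hab]
      exact (List.prefix_iff_eq_take.mp hypre).symm
    rw [hx, hy]; exact hab

lemma hasIntB_swap {u v : List Bool} (h : HasExtB u v) : HasIntB v u := by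
  obtain ⟨x, y, hx0, hxu, hxpre, hysuf, hyv, hab⟩ := h
  refine ⟨y, x, ?_, hyv, hysuf, hxpre, hxu, abEq_symm hab⟩
  intro he
  apply hx0
  have := abEq_length hab
  rw [he] at this
  exact List.length_eq_zero_iff.mp this

theorem stmt_3 (n : ℕ) (hn : 3 ≤ n) (u v : List Bool)
    (hu : u.length = n) (hv : v.length = n) (hmab : MAB u v)
    (i j : ℕ) (hi : i = lsb u v) (hj : j = lsb v u) :
    n < i + j ↔
      ∃ α γ β β' γ' α' : List Bool,
        α ≠ [] ∧ γ ≠ [] ∧ β ≠ [] ∧ β' ≠ [] ∧ γ' ≠ [] ∧ α' ≠ [] ∧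
        u = α ++ γ ++ β ∧ v = β' ++ γ' ++ α' ∧
        AbEq (α ++ γ) (γ' ++ α') ∧ AbEq (γ ++ β) (β' ++ γ') ∧
        (α ++ γ).length = j ∧ (γ ++ β).length = i ∧
        MAU (γ ++ β) (β' ++ γ') ∧ MAU (α ++ γ) (γ' ++ α') := by
  have hvu : HasIntB v u := hasIntB_swap hmab.2
  have hiMem := Nat.sInf_mem (lsbSet_nonempty hmab.1)
  have hjMem := Nat.sInf_mem (lsbSet_nonempty hvu)
  rw [← lsb, ← hi, hu] at hiMem
  rw [← lsb, ← hj, hv] at hjMem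
  obtain ⟨hi1, hi2, hiab⟩ := hiMem
  obtain ⟨hj1, hj2, hjab⟩ := hjMem
  have hmin_i : ∀ t, 1 ≤ t → t ≤ n - 1 → AbEq (u.drop (n - t)) (v.take t) → i ≤ t := by
    intro t h1 h2 h3
    rw [hi]
    exact Nat.sInf_le ⟨h1, by rw [hu]; exact h2, by rw [hu]; exact h3⟩
  have hmin_j : ∀ t, 1 ≤ t → t ≤ n - 1 → AbEq (v.drop (n - t)) (u.take t) → j ≤ t := by
    intro t h1 h2 h3
    rw [hj]
    exact Nat.sInf_le ⟨h1, by rw [hv]; exact h2, by rw [hv]; exact h3⟩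
  constructor
  · intro hlt
    refine ⟨u.take (n-i), (u.drop (n-i)).take (i+j-n), u.drop j,
            v.take (n-j), (v.drop (n-j)).take (i+j-n), v.drop i, ?_, ?_, ?_, ?_, ?_, ?_,
            ?_, ?_, ?_, ?_, ?_, ?_, ?_, ?_⟩
    case _ => -- α ≠ []
      apply List.length_pos_iff.mp; rw [List.length_take]; omega
    case _ =>
      apply List.length_pos_iff.mp; rw [List.length_take, List.length_drop]; omega
    case _ =>
      apply List.length_pos_iff.mp; rw [List.length_drop]; omega
    case _ =>
      apply List.length_pos_iff.mp; rw [List.length_take]; omega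
    case _ =>
      apply List.length_pos_iff.mp; rw [List.length_take, List.length_drop]; omega
    case _ =>
      apply List.length_pos_iff.mp; rw [List.length_drop]; omega
    all_goals {
      have hAG : u.take (n-i) ++ (u.drop (n-i)).take (i+j-n) = u.take j := by
        rw [← List.take_add]; congr 1; omega
      have hGB : (u.drop (n-i)).take (i+j-n) ++ u.drop j = u.drop (n-i) := by
        have hd : u.drop j = (u.drop (n-i)).drop (i+j-n) := by
          rw [List.drop_drop]; congr 1; omega
        rw [hd, List.take_append_drop]
      have hBG : v.take (n-j) ++ (v.drop (n-j)).take (i+j-n) = v.take i := by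
        rw [← List.take_add]; congr 1; omega
      have hGA : (v.drop (n-j)).take (i+j-n) ++ v.drop i = v.drop (n-j) := by
        have hd : v.drop i = (v.drop (n-j)).drop (i+j-n) := by
          rw [List.drop_drop]; congr 1; omega
        rw [hd, List.take_append_drop]
      first
      | -- u = α ++ γ ++ β
        (show u = _; rw [List.append_assoc, hGB, List.take_append_drop])
      | -- v = β' ++ γ' ++ α'
        (show v = _; rw [List.append_assoc, hGA, List.take_append_drop])
      | -- AbEq (α ++ γ) (γ' ++ α')
        (show AbEq _ _; rw [hAG, hGA]; exact abEq_symm hjab)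
      | -- AbEq (γ ++ β) (β' ++ γ')
        (show AbEq _ _; rw [hGB, hBG]; exact hiab)
      | -- lengths
        (show _ = j; rw [hAG, List.length_take, hu]; omega)
      | (show _ = i; rw [hGB, List.length_drop, hu]; omega)
      | -- MAU (γ ++ β) (β' ++ γ')
        (show MAU _ _
         rw [hGB, hBG]
         constructor
         · rintro ⟨x, y, hx0, hxne, hxsuf, hypre, hyne, hab⟩
           have ht0 : 1 ≤ x.length := List.length_pos_iff.mpr hx0
           have hlen : (u.drop (n-i)).length = i := by rw [List.length_drop, hu]; omega
           have htlt : x.length < i := by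
             have h1 := hxsuf.length_le
             rw [hlen] at h1
             rcases lt_or_eq_of_le h1 with h | h
             · exact h
             · exact absurd (hxsuf.eq_of_length (by rw [hlen, h])) hxne
           have hx : x = u.drop (n - x.length) := by
             have := suffix_eq_drop (hxsuf.trans (List.drop_suffix _ _))
             rwa [hu] at this
           have hy : y = v.take x.length := by
             have := List.prefix_iff_eq_take.mp (hypre.trans (List.take_prefix _ _))
             rw [this, ← abEq_length hab]
           have := hmin_i x.length ht0 (by omega) (by rw [← hx, ← hy]; exact hab)
           omega
         · rintro ⟨x, y, hx0, hxne, hxpre, hysuf, hyne, hab⟩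
           have ht0 : 1 ≤ x.length := List.length_pos_iff.mpr hx0
           have hlen : (u.drop (n-i)).length = i := by rw [List.length_drop, hu]; omega
           have htlt : x.length < i := by
             have h1 := hxpre.length_le
             rw [hlen] at h1
             rcases lt_or_eq_of_le h1 with h | h
             · exact h
             · exact absurd (hxpre.eq_of_length (by rw [hlen, h])) hxne
           obtain ⟨x', hxx⟩ := hxpre
           obtain ⟨y', hyy⟩ := hysuf
           have hx' : x' = u.drop (n - (i - x.length)) := by
             have h1 : x' = (u.drop (n-i)).drop x.length := by
               rw [← hxx, List.drop_left]
             rw [h1, List.drop_drop]; congr 1; omega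
           have hy' : y' = v.take (i - x.length) := by
             have h0 : y' <+: v.take i := ⟨y, hyy⟩
             have h1 : y' <+: v := h0.trans (List.take_prefix _ _)
             have hyl : y'.length = i - x.length := by
               have h2 := congrArg List.length hyy
               rw [List.length_append, List.length_take, hv, ← abEq_length hab] at h2
               omega
             rw [List.prefix_iff_eq_take.mp h1, hyl]
           have habc : AbEq x' y' :=
             abEq_cancel (by rw [hxx, hyy]; exact hiab) hab
           have := hmin_i (i - x.length) (by omega) (by omega)
             (by rw [← hx', ← hy']; exact habc)
           omega)
      | -- MAU (α ++ γ) (γ' ++ α')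
        (show MAU _ _
         rw [hAG, hGA]
         constructor
         · rintro ⟨x, y, hx0, hxne, hxsuf, hypre, hyne, hab⟩
           have ht0 : 1 ≤ x.length := List.length_pos_iff.mpr hx0
           have hlen : (u.take j).length = j := by rw [List.length_take, hu]; omega
           have htlt : x.length < j := by
             have h1 := hxsuf.length_le
             rw [hlen] at h1
             rcases lt_or_eq_of_le h1 with h | h
             · exact h
             · exact absurd (hxsuf.eq_of_length (by rw [hlen, h])) hxne
           obtain ⟨x'', hxx⟩ := hxsuf
           obtain ⟨y'', hyy⟩ := hypre
           have hx'' : x'' = u.take (j - x.length) := by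
             have h0 : x'' <+: u.take j := ⟨x, hxx⟩
             have h1 : x'' <+: u := h0.trans (List.take_prefix _ _)
             have hxl : x''.length = j - x.length := by
               have h2 := congrArg List.length hxx
               rw [List.length_append, List.length_take, hu] at h2
               omega
             rw [List.prefix_iff_eq_take.mp h1, hxl]
           have hy'' : y'' = v.drop (n - (j - x.length)) := by
             have h1 : y'' = (v.drop (n-j)).drop y.length := by
               rw [← hyy, List.drop_left]
             rw [h1, List.drop_drop, ← abEq_length hab]; congr 1; omega
           have habc : AbEq y'' x'' :=
             abEq_cancel (by rw [hyy, hxx]; exact hjab) (abEq_symm hab)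
           have := hmin_j (j - x.length) (by omega) (by omega)
             (by rw [← hx'', ← hy'']; exact habc)
           omega
         · rintro ⟨x, y, hx0, hxne, hxpre, hysuf, hyne, hab⟩
           have ht0 : 1 ≤ x.length := List.length_pos_iff.mpr hx0
           have hlen : (u.take j).length = j := by rw [List.length_take, hu]; omega
           have htlt : x.length < j := by
             have h1 := hxpre.length_le
             rw [hlen] at h1
             rcases lt_or_eq_of_le h1 with h | h
             · exact h
             · exact absurd (hxpre.eq_of_length (by rw [hlen, h])) hxne
           have hx : x = u.take x.length := by
             exact List.prefix_iff_eq_take.mp (hxpre.trans (List.take_prefix _ _))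
           have hy : y = v.drop (n - x.length) := by
             have := suffix_eq_drop (hysuf.trans (List.drop_suffix _ _))
             rwa [hv, ← abEq_length hab] at this
           have := hmin_j x.length ht0 (by omega)
             (by rw [← hx, ← hy]; exact abEq_symm hab)
           omega)
    }
  · rintro ⟨α, γ, β, β', γ', α', hα, hγ, hβ, hβ', hγ', hα', huu, hvv, hab1, hab2,
      hlj, hli, hmau1, hmau2⟩
    rw [huu, List.length_append, List.length_append] at hu
    rw [List.length_append] at hlj hli
    have hγ1 : 0 < γ.length := List.length_pos_iff.mpr hγ
    omega
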